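/- For every k ∈ ℤ, every θ ∈ ℂ, and all probability measures g, g⁰ on [0,1] admitting densities in L²([0,1]) (still denoted g, g⁰), the total variation distance between the frequency-k marginal mixtures satisfies d_TV(q_{θ,k,g}, q_{θ,k,g⁰}) ≤ e^{|θ|²} ‖g − g⁰‖_{L²([0,1])}. (Inequality (4.4) established in the proof of the paper's Theorem 4.3.) -/

import Mathlib

open MeasureTheory Measure
open scoped ENNReal NNReal

noncomputable section

/-- The frequency-`k` marginal mixture density on `ℂ`:
`q_{θ,k,g}(z) = π⁻¹ ∫₀¹ exp(-|z - θ e^{-2πikφ}|²) dg(φ)`, for a mixing measure `g`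
(a measure on `ℝ` thought of as carried by `[0,1]`). -/
def qdens (θ : ℂ) (k : ℤ) (g : Measure ℝ) (z : ℂ) : ℝ :=
  (∫ φ, Real.exp (-(norm
      (z - θ * Complex.exp (-(2 * Real.pi * (k : ℝ) * φ : ℝ) * Complex.I))) ^ 2) ∂g) / Real.pi

/-- Total variation distance between densities on `ℂ`. -/
def dTVc (q₁ q₂ : ℂ → ℝ) : ℝ :=
  (1 / 2) * ∫ z : ℂ, |q₁ z - q₂ z|

/-- A probability measure on `[0,1]`, modelled as a probability measure on `ℝ`
giving no mass to the complement of `[0,1]`. -/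
def IsProbOn01 (g : Measure ℝ) : Prop :=
  IsProbabilityMeasure g ∧ g (Set.Icc (0 : ℝ) 1)ᶜ = 0

/-- The Fourier coefficients `cₙ(g) = ∫₀¹ e^{-2πint} dg(t)` of a measure `g`. -/
def fourierCoeffM (g : Measure ℝ) (n : ℤ) : ℂ :=
  ∫ t, Complex.exp (-(2 * Real.pi * (n : ℝ) * t : ℝ) * Complex.I) ∂g

lemma gaussRP_eq (z : ℂ) :
    Real.exp (-(norm z)^2)
      = Real.exp (-(Complex.measurableEquivRealProd z).1^2)
        * Real.exp (-(Complex.measurableEquivRealProd z).2^2) := by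
  rw [← Real.exp_add, Complex.sq_norm, Complex.normSq_apply,
    Complex.measurableEquivRealProd_apply]
  ring_nf

lemma gauss_integrable_c : Integrable (fun z : ℂ => Real.exp (-(norm z)^2)) := by
  have h1 : Integrable (fun x : ℝ => Real.exp (-x^2)) := by
    simpa using integrable_exp_neg_mul_sq (one_pos)
  have hH : Integrable (fun p : ℝ × ℝ => Real.exp (-p.1^2) * Real.exp (-p.2^2))
      volume := by rw [volume_eq_prod]; exact h1.mul_prod h1
  have := (Complex.volume_preserving_equiv_real_prod.integrable_comp_emb
    Complex.measurableEquivRealProd.measurableEmbedding).2 hH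
  simp only [Function.comp_def] at this
  exact this.congr (Filter.Eventually.of_forall fun z => (gaussRP_eq z).symm)

lemma gauss_integral_c : ∫ z : ℂ, Real.exp (-(norm z)^2) = Real.pi := by
  have h1 : ∫ x : ℝ, Real.exp (-x^2) = Real.sqrt Real.pi := by
    simpa using integral_gaussian 1
  have h2 : ∫ z : ℂ, Real.exp (-(norm z)^2)
      = ∫ p : ℝ × ℝ, Real.exp (-p.1^2) * Real.exp (-p.2^2) := by
    rw [← Complex.volume_preserving_equiv_real_prod.integral_comp
      Complex.measurableEquivRealProd.measurableEmbedding
      (fun p : ℝ × ℝ => Real.exp (-p.1^2) * Real.exp (-p.2^2))]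
    exact integral_congr_ae (Filter.Eventually.of_forall gaussRP_eq)
  rw [h2, volume_eq_prod, integral_prod_mul (fun x : ℝ => Real.exp (-x^2)) (fun x : ℝ => Real.exp (-x^2)), h1,
    Real.mul_self_sqrt Real.pi_pos.le]

lemma gauss_shift_integrable (w : ℂ) :
    Integrable (fun z : ℂ => Real.exp (-(norm (z - w))^2)) :=
  gauss_integrable_c.comp_sub_right w

lemma gauss_shift_integral (w : ℂ) :
    ∫ z : ℂ, Real.exp (-(norm (z - w))^2) = Real.pi := by
  rw [← gauss_integral_c]
  exact integral_sub_right_eq_self (fun z : ℂ => Real.exp (-(norm z)^2)) w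

section Main
open Set

variable (θ : ℂ) (k : ℤ)

/-- The shift point. -/
noncomputable def wpt (φ : ℝ) : ℂ := θ * Complex.exp (-(2 * Real.pi * (k : ℝ) * φ : ℝ) * Complex.I)

lemma wpt_cont : Continuous (wpt θ k) := by
  unfold wpt
  fun_prop

lemma wpt_abs_le (φ : ℝ) : norm (wpt θ k φ) ≤ norm θ := by
  unfold wpt
  rw [norm_mul]
  have : norm (Complex.exp (-(2 * Real.pi * (k : ℝ) * φ : ℝ) * Complex.I)) = 1 := by
    rw [Complex.norm_exp]
    norm_num [Complex.ofReal_mul, Complex.mul_I_re]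
  rw [this, mul_one]

/-- the Gaussian kernel -/
noncomputable def fker (z : ℂ) (φ : ℝ) : ℝ := Real.exp (-(norm (z - wpt θ k φ))^2)

lemma fker_nonneg (z : ℂ) (φ : ℝ) : 0 ≤ fker θ k z φ := Real.exp_nonneg _
lemma fker_le_one (z : ℂ) (φ : ℝ) : fker θ k z φ ≤ 1 := by
  apply Real.exp_le_one_iff.mpr
  simp [sq_nonneg]

lemma fker_cont : Continuous (fun p : ℂ × ℝ => fker θ k p.1 p.2) := by
  unfold fker
  have h1 : Continuous fun p : ℂ × ℝ => p.1 - wpt θ k p.2 :=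
    continuous_fst.sub ((wpt_cont θ k).comp continuous_snd)
  exact Real.continuous_exp.comp ((continuous_norm.comp h1).pow 2).neg

lemma fker_integrable (φ : ℝ) : Integrable (fun z => fker θ k z φ) := gauss_shift_integrable _
lemma fker_integral (φ : ℝ) : ∫ z : ℂ, fker θ k z φ = Real.pi := gauss_shift_integral _

end Main

section Fub
open Set

lemma fubini_bound (θ : ℂ) (k : ℤ) (μ : Measure ℝ) [IsFiniteMeasure μ]
    (D : ℝ → ℝ) (hD : Measurable D) (hDi : Integrable D μ) (hD0 : ∀ φ, 0 ≤ D φ) :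
    Integrable (fun z : ℂ => ∫ φ, D φ * fker θ k z φ ∂μ) ∧
      ∫ z : ℂ, (∫ φ, D φ * fker θ k z φ ∂μ) = (∫ φ, D φ ∂μ) * Real.pi := by
  have hF_meas : AEStronglyMeasurable (fun p : ℝ × ℂ => D p.1 * fker θ k p.2 p.1)
      (μ.prod volume) :=
    ((hD.comp measurable_fst).mul
      ((fker_cont θ k).measurable.comp
        (measurable_snd.prodMk measurable_fst))).aestronglyMeasurable
  have hker_int_eq : ∀ φ, (∫ z : ℂ, D φ * fker θ k z φ) = D φ * Real.pi := fun φ => by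
    rw [integral_const_mul, fker_integral]
  have hF_int : Integrable (fun p : ℝ × ℂ => D p.1 * fker θ k p.2 p.1) (μ.prod volume) := by
    refine (integrable_prod_iff hF_meas).2 ⟨?_, ?_⟩
    · exact Filter.Eventually.of_forall fun φ => by
        simpa using (fker_integrable θ k φ).const_mul (D φ)
    · have heq : (fun φ => ∫ z : ℂ, ‖D φ * fker θ k z φ‖) = fun φ => D φ * Real.pi := by
        funext φ
        rw [← hker_int_eq φ]
        refine integral_congr_ae (Filter.Eventually.of_forall fun z => ?_)
        simp only [Real.norm_eq_abs, abs_mul, abs_of_nonneg (hD0 φ),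
          abs_of_nonneg (fker_nonneg θ k z φ)]
      rw [heq]
      exact hDi.mul_const _
  constructor
  · exact hF_int.integral_prod_right
  · rw [← integral_integral_swap hF_int]
    simp_rw [hker_int_eq]
    rw [integral_mul_const]

end Fub

section Main2
open Set

lemma qdens_rw (θ : ℂ) (k : ℤ) (d : ℝ → ℝ) (hd : Measurable d) (z : ℂ) :
    qdens θ k ((volume.restrict (Set.Icc (0 : ℝ) 1)).withDensity
        (fun t => ENNReal.ofReal (d t))) z
      = (∫ φ in Set.Icc (0:ℝ) 1, max (d φ) 0 * fker θ k z φ) / Real.pi := by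
  unfold qdens
  congr 1
  have h0 : (fun t => ENNReal.ofReal (d t)) = (fun t => ((d t).toNNReal : ℝ≥0∞)) := rfl
  rw [h0, integral_withDensity_eq_integral_smul hd.real_toNNReal]
  refine integral_congr_ae (Filter.Eventually.of_forall fun φ => ?_)
  show (d φ).toNNReal • _ = _
  rw [NNReal.smul_def, smul_eq_mul, Real.coe_toNNReal']
  rfl

end Main2

set_option maxHeartbeats 2000000 in
/-- **Inequality (4.4) in the proof of Theorem 4.3 of the paper.** For every `k ∈ ℤ`, `θ ∈ ℂ`,
and probability measures `g, g⁰` on `[0,1]` with densities `gd, g⁰d ∈ L²([0,1])`,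
`d_TV(q_{θ,k,g}, q_{θ,k,g⁰}) ≤ e^{|θ|²} ‖gd - g⁰d‖_{L²([0,1])}`. -/
theorem tv_mixture_le_L2 (k : ℤ) (θ : ℂ)
    (gd g0d : ℝ → ℝ) (hgd : Measurable gd) (hg0d : Measurable g0d)
    (hgd2 : MemLp gd 2 (volume.restrict (Set.Icc (0 : ℝ) 1)))
    (hg0d2 : MemLp g0d 2 (volume.restrict (Set.Icc (0 : ℝ) 1)))
    (g g0 : Measure ℝ)
    (hgdef : g = (volume.restrict (Set.Icc (0 : ℝ) 1)).withDensity
      (fun t => ENNReal.ofReal (gd t)))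
    (hg0def : g0 = (volume.restrict (Set.Icc (0 : ℝ) 1)).withDensity
      (fun t => ENNReal.ofReal (g0d t)))
    (hg : IsProbabilityMeasure g) (hg0 : IsProbabilityMeasure g0) :
    dTVc (qdens θ k g) (qdens θ k g0)
      ≤ Real.exp (norm θ ^ 2)
          * Real.sqrt (∫ t in Set.Icc (0 : ℝ) 1, (gd t - g0d t) ^ 2) := by
  classical
  set μ : Measure ℝ := volume.restrict (Set.Icc (0 : ℝ) 1) with hμ
  haveI hμfin : IsFiniteMeasure μ := by
    refine ⟨?_⟩
    rw [hμ, Measure.restrict_apply_univ, Real.volume_Icc]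
    norm_num
  set c : ℝ → ℝ := fun φ => max (gd φ) 0 with hc
  set c0 : ℝ → ℝ := fun φ => max (g0d φ) 0 with hc0
  have hc_meas : Measurable c := hgd.max measurable_const
  have hc0_meas : Measurable c0 := hg0d.max measurable_const
  have habs_max : ∀ (x : ℝ), |max x 0| ≤ |x| := fun x => by
    rw [abs_of_nonneg (le_max_right x 0)]
    exact max_le (le_abs_self x) (abs_nonneg x)
  have hc2 : MemLp c 2 μ := hgd2.of_le hc_meas.aestronglyMeasurable
    (Filter.Eventually.of_forall fun φ => by
      simpa [Real.norm_eq_abs] using habs_max (gd φ))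
  have hc02 : MemLp c0 2 μ := hg0d2.of_le hc0_meas.aestronglyMeasurable
    (Filter.Eventually.of_forall fun φ => by
      simpa [Real.norm_eq_abs] using habs_max (g0d φ))
  have hc_int : Integrable c μ := hc2.integrable one_le_two
  have hc0_int : Integrable c0 μ := hc02.integrable one_le_two
  set Δ : ℝ → ℝ := fun φ => c φ - c0 φ with hΔ
  have hΔ_meas : Measurable Δ := hc_meas.sub hc0_meas
  have hΔ2 : MemLp Δ 2 μ := hc2.sub hc02
  have hΔ_int : Integrable Δ μ := hc_int.sub hc0_int
  have hΔ_le : ∀ φ, |Δ φ| ≤ |gd φ - g0d φ| := fun φ => abs_max_sub_max_le_abs _ _ _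
  -- the two densities, rewritten
  have hq1 : ∀ z, qdens θ k g z = (∫ φ, c φ * fker θ k z φ ∂μ) / Real.pi := fun z => by
    rw [hgdef, qdens_rw θ k gd hgd z]
  have hq01 : ∀ z, qdens θ k g0 z = (∫ φ, c0 φ * fker θ k z φ ∂μ) / Real.pi := fun z => by
    rw [hg0def, qdens_rw θ k g0d hg0d z]
  -- integrability of the integrands
  have hmul_int : ∀ (d : ℝ → ℝ), Measurable d → Integrable d μ →
      ∀ z : ℂ, Integrable (fun φ => d φ * fker θ k z φ) μ := by
    intro d hdm hdi z
    have := hdi.bdd_mul ((fker_cont θ k).measurable.comp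
      ((measurable_const (a := z)).prodMk measurable_id)).aestronglyMeasurable
      (c := 1) (Filter.Eventually.of_forall fun φ => by
        simpa [Real.norm_eq_abs, abs_of_nonneg (fker_nonneg θ k z φ)] using
          fker_le_one θ k z φ)
    exact this.congr (Filter.Eventually.of_forall fun φ => mul_comm _ _)
  -- pointwise bound
  have hpt : ∀ z, |qdens θ k g z - qdens θ k g0 z|
      ≤ (∫ φ, |Δ φ| * fker θ k z φ ∂μ) / Real.pi := by
    intro z
    rw [hq1 z, hq01 z, div_sub_div_same, abs_div, abs_of_pos Real.pi_pos]
    have hsub : (∫ φ, c φ * fker θ k z φ ∂μ) - (∫ φ, c0 φ * fker θ k z φ ∂μ)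
        = ∫ φ, Δ φ * fker θ k z φ ∂μ := by
      rw [← integral_sub (hmul_int c hc_meas hc_int z) (hmul_int c0 hc0_meas hc0_int z)]
      refine integral_congr_ae (Filter.Eventually.of_forall fun φ => ?_)
      simp [hΔ, sub_mul]
    rw [hsub]
    gcongr
    calc |∫ φ, Δ φ * fker θ k z φ ∂μ| ≤ ∫ φ, |Δ φ| * |fker θ k z φ| ∂μ := by
          simpa [Real.norm_eq_abs, abs_mul] using
            norm_integral_le_integral_norm (fun φ => Δ φ * fker θ k z φ) (μ := μ)
      _ = ∫ φ, |Δ φ| * fker θ k z φ ∂μ := by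
          refine integral_congr_ae (Filter.Eventually.of_forall fun φ => ?_)
          simp [abs_of_nonneg (fker_nonneg θ k z φ)]
  -- Fubini bound
  obtain ⟨hB_int, hB_integral⟩ := fubini_bound θ k μ (fun φ => |Δ φ|)
    hΔ_meas.abs hΔ_int.abs (fun φ => abs_nonneg _)
  -- measurability of the difference of densities
  have hq_meas : ∀ (d : ℝ → ℝ), Measurable d →
      StronglyMeasurable (fun z : ℂ => ∫ φ, d φ * fker θ k z φ ∂μ) := by
    intro d hdm
    exact (((hdm.comp measurable_snd).mul
      ((fker_cont θ k).measurable)).stronglyMeasurable).integral_prod_right'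
  have hqd_meas : AEStronglyMeasurable
      (fun z : ℂ => |qdens θ k g z - qdens θ k g0 z|) volume := by
    have h1 := (hq_meas c hc_meas).measurable
    have h2 := (hq_meas c0 hc0_meas).measurable
    have heq : (fun z : ℂ => |qdens θ k g z - qdens θ k g0 z|)
        = fun z => |((∫ φ, c φ * fker θ k z φ ∂μ) / Real.pi)
            - ((∫ φ, c0 φ * fker θ k z φ ∂μ) / Real.pi)| := by
      funext z; rw [hq1 z, hq01 z]
    rw [heq]
    exact (((h1.div_const _).sub (h2.div_const _)).abs).aestronglyMeasurable
  have hqd_int : Integrable (fun z : ℂ => |qdens θ k g z - qdens θ k g0 z|) := by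
    refine Integrable.mono' (hB_int.div_const Real.pi) hqd_meas
      (Filter.Eventually.of_forall fun z => ?_)
    rw [Real.norm_eq_abs, abs_abs]
    exact hpt z
  have hmain : ∫ z : ℂ, |qdens θ k g z - qdens θ k g0 z| ≤ ∫ φ, |Δ φ| ∂μ := by
    calc ∫ z : ℂ, |qdens θ k g z - qdens θ k g0 z|
        ≤ ∫ z : ℂ, (∫ φ, |Δ φ| * fker θ k z φ ∂μ) / Real.pi :=
          integral_mono hqd_int (hB_int.div_const _) hpt
      _ = ((∫ φ, |Δ φ| ∂μ) * Real.pi) / Real.pi := by rw [integral_div, hB_integral]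
      _ = ∫ φ, |Δ φ| ∂μ := by field_simp
  -- Cauchy–Schwarz on [0,1]
  have hμ1 : (μ Set.univ).toReal = 1 := by
    rw [hμ, Measure.restrict_apply_univ, Real.volume_Icc]
    norm_num
  have hr2 : ∀ x : ℝ, x ^ (2:ℝ) = x ^ 2 := fun x => by
    rw [show ((2:ℝ)) = ((2:ℕ):ℝ) by norm_num, Real.rpow_natCast]
  have hCS : ∫ φ, |Δ φ| ∂μ ≤ Real.sqrt (∫ φ, (Δ φ)^2 ∂μ) := by
    have hpq : Real.HolderConjugate 2 2 := Real.HolderConjugate.two_two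
    have h2 : (ENNReal.ofReal (2:ℝ)) = 2 := by
      norm_num
    have hf2 : MemLp (fun φ => |Δ φ|) (ENNReal.ofReal (2:ℝ)) μ := by
      rw [h2]; exact hΔ2.abs
    have hg2 : MemLp (fun _ : ℝ => (1:ℝ)) (ENNReal.ofReal (2:ℝ)) μ := by
      rw [h2]; exact memLp_const 1
    have hcs := integral_mul_le_Lp_mul_Lq_of_nonneg hpq
      (Filter.Eventually.of_forall fun φ => abs_nonneg (Δ φ))
      (Filter.Eventually.of_forall fun _ => zero_le_one) hf2 hg2
    simp only [mul_one, Real.one_rpow, hr2, sq_abs, one_pow, integral_const, measureReal_def, hμ1, smul_eq_mul]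
      at hcs
    calc ∫ φ, |Δ φ| ∂μ ≤ (∫ φ, (Δ φ)^2 ∂μ) ^ ((1:ℝ)/2) := hcs
      _ = Real.sqrt (∫ φ, (Δ φ)^2 ∂μ) := by
          rw [Real.sqrt_eq_rpow]
  -- compare with the original L² difference
  have hmono : ∫ φ, (Δ φ)^2 ∂μ ≤ ∫ t in Set.Icc (0:ℝ) 1, (gd t - g0d t)^2 := by
    refine integral_mono hΔ2.integrable_sq ?_ ?_
    · have := (hgd2.sub hg0d2).integrable_sq
      exact this.congr (Filter.Eventually.of_forall fun φ => by simp [Pi.sub_apply])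
    · intro φ
      calc (Δ φ)^2 = |Δ φ|^2 := (sq_abs _).symm
        _ ≤ |gd φ - g0d φ|^2 := pow_le_pow_left₀ (abs_nonneg _) (hΔ_le φ) 2
        _ = (gd φ - g0d φ)^2 := sq_abs _
  have hsqrt_mono : Real.sqrt (∫ φ, (Δ φ)^2 ∂μ)
      ≤ Real.sqrt (∫ t in Set.Icc (0:ℝ) 1, (gd t - g0d t)^2) := Real.sqrt_le_sqrt hmono
  have hsqrt_nonneg : (0:ℝ) ≤ Real.sqrt (∫ t in Set.Icc (0:ℝ) 1, (gd t - g0d t)^2) :=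
    Real.sqrt_nonneg _
  have hfinal : (1/2 : ℝ) ≤ Real.exp (norm θ ^ 2) := by
    have := Real.one_le_exp (sq_nonneg (norm θ))
    linarith
  unfold dTVc
  calc (1/2 : ℝ) * ∫ z : ℂ, |qdens θ k g z - qdens θ k g0 z|
      ≤ (1/2 : ℝ) * (∫ φ, |Δ φ| ∂μ) := by
        have h12 : (0:ℝ) ≤ 1/2 := by norm_num
        exact mul_le_mul_of_nonneg_left hmain h12
    _ ≤ (1/2 : ℝ) * Real.sqrt (∫ t in Set.Icc (0:ℝ) 1, (gd t - g0d t)^2) := by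
        have h12 : (0:ℝ) ≤ 1/2 := by norm_num
        exact mul_le_mul_of_nonneg_left (hCS.trans hsqrt_mono) h12
    _ ≤ Real.exp (norm θ ^ 2)
        * Real.sqrt (∫ t in Set.Icc (0:ℝ) 1, (gd t - g0d t)^2) :=
        mul_le_mul_of_nonneg_right hfinal hsqrt_nonneg

end
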